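/- arXiv:1112.2861 — 2 statements merged into one kernel-verified Lean document; each statement's English description precedes it below -/
import Mathlib

section
/- Let f : 2^N → {0,1} with f(∅) = 0 be a function on n voters. Then the critical threshold value μ(f) is rational, and there exist coprime positive integers p and q with 1 ≤ q ≤ p ≤ ⌊(n+2)^{(n+2)/2} / 2^{n+1}⌋ such that μ(f) = p/q. -/
open Matrix BigOperators

namespace CTRB

variable {d : ℕ} {ι : Type} [Fintype ι]

lemma dot_add_smul (v x y : Fin d → ℝ) (t : ℝ) :
    v ⬝ᵥ (x + t • y) = v ⬝ᵥ x + t * (v ⬝ᵥ y) := by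
  rw [dotProduct_add, dotProduct_smul]; simp [smul_eq_mul]

/-- If the rows indexed by `T` do not span, there is a nonzero vector orthogonal
to all of them. -/
lemma exists_orth (a : ι → Fin d → ℝ) (T : Set ι)
    (h : Submodule.span ℝ (a '' T) ≠ ⊤) :
    ∃ y : Fin d → ℝ, y ≠ 0 ∧ ∀ i ∈ T, a i ⬝ᵥ y = 0 := by
  classical
  haveI : Fintype T := Fintype.ofFinite T
  set M : Matrix T (Fin d) ℝ := fun i j => a i.1 j with hM
  have hker : LinearMap.ker M.mulVecLin ≠ ⊥ := by
    intro hk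
    apply h
    have h1 := LinearMap.finrank_range_add_finrank_ker M.mulVecLin
    rw [hk, finrank_bot, add_zero] at h1
    have h2 : M.rank = d := by
      rw [Matrix.rank]; rw [h1]; simp [Module.finrank_pi]
    have h3 : Mᵀ.rank = d := by rw [Matrix.rank_transpose]; exact h2
    have h4 : LinearMap.range Mᵀ.mulVecLin = Submodule.span ℝ (Set.range M) := by
      rw [Matrix.range_mulVecLin]; rfl
    have h5 : Set.range M = a '' T := by
      rw [hM]
      ext v
      constructor
      · rintro ⟨i, rfl⟩; exact ⟨i.1, i.2, rfl⟩
      · rintro ⟨i, hi, rfl⟩; exact ⟨⟨i, hi⟩, rfl⟩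
    have h6 : Module.finrank ℝ (Submodule.span ℝ (a '' T)) = d := by
      rw [← h5, ← h4]; exact h3
    apply Submodule.eq_top_of_finrank_eq
    rw [h6]; simp [Module.finrank_pi]
  rw [Submodule.ne_bot_iff] at hker
  obtain ⟨y, hy, hy0⟩ := hker
  refine ⟨y, hy0, fun i hi => ?_⟩
  rw [LinearMap.mem_ker, Matrix.mulVecLin_apply] at hy
  have := congrFun hy ⟨i, hi⟩
  simpa [Matrix.mulVec, hM] using this

/-- Move from a feasible point along a direction orthogonal to all tight rows,
with non-positive objective derivative, until a new constraint becomes tight. -/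
lemma move (a : ι → Fin d → ℝ) (b : ι → ℝ) (c : Fin d → ℝ) (x y : Fin d → ℝ)
    (hx : ∀ i, b i ≤ a i ⬝ᵥ x)
    (hyT : ∀ i, a i ⬝ᵥ x = b i → a i ⬝ᵥ y = 0)
    (hcy : c ⬝ᵥ y ≤ 0)
    (hJ : ∃ i, a i ⬝ᵥ y < 0) :
    ∃ x', (∀ i, b i ≤ a i ⬝ᵥ x') ∧ c ⬝ᵥ x' ≤ c ⬝ᵥ x ∧
      (∀ i, a i ⬝ᵥ x = b i → a i ⬝ᵥ x' = b i) ∧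
      ∃ j, a j ⬝ᵥ x' = b j ∧ a j ⬝ᵥ y < 0 := by
  classical
  set J : Finset ι := Finset.univ.filter (fun i => a i ⬝ᵥ y < 0) with hJdef
  have hJne : J.Nonempty := by
    obtain ⟨i, hi⟩ := hJ
    exact ⟨i, by simp [hJdef, hi]⟩
  set ratio : ι → ℝ := fun i => (a i ⬝ᵥ x - b i) / (-(a i ⬝ᵥ y)) with hratio
  obtain ⟨j, hjJ, hjmin⟩ := J.exists_min_image ratio hJne
  have hjneg : a j ⬝ᵥ y < 0 := by simpa [hJdef] using hjJ
  set t : ℝ := ratio j with ht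
  have htnn : 0 ≤ t := by
    apply div_nonneg
    · linarith [hx j]
    · linarith
  refine ⟨x + t • y, ?_, ?_, ?_, j, ?_, hjneg⟩
  · intro i
    rw [dot_add_smul]
    by_cases hiJ : a i ⬝ᵥ y < 0
    · have hle : t ≤ ratio i := hjmin i (by simp [hJdef, hiJ])
      have h1 : ratio i * (a i ⬝ᵥ y) = -(a i ⬝ᵥ x - b i) := by
        have hne : a i ⬝ᵥ y ≠ 0 := ne_of_lt hiJ
        show (a i ⬝ᵥ x - b i) / (-(a i ⬝ᵥ y)) * (a i ⬝ᵥ y) = _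
        rw [div_neg, neg_mul, div_mul_cancel₀ _ hne]
      nlinarith [hx i]
    · push_neg at hiJ
      nlinarith [hx i]
  · rw [dot_add_smul]; nlinarith
  · intro i hi
    rw [dot_add_smul, hyT i hi, mul_zero, add_zero]; exact hi
  · rw [dot_add_smul]
    have h1 : t * (a j ⬝ᵥ y) = -(a j ⬝ᵥ x - b j) := by
      have hne : a j ⬝ᵥ y ≠ 0 := ne_of_lt hjneg
      show (a j ⬝ᵥ x - b j) / (-(a j ⬝ᵥ y)) * (a j ⬝ᵥ y) = _
      rw [div_neg, neg_mul, div_mul_cancel₀ _ hne]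
    linarith

noncomputable def dotLM (y : Fin d → ℝ) : (Fin d → ℝ) →ₗ[ℝ] ℝ :=
  ∑ j, y j • LinearMap.proj j

lemma dotLM_apply (y v : Fin d → ℝ) : dotLM y v = v ⬝ᵥ y := by
  simp [dotLM, dotProduct, mul_comm]

lemma span_dot_zero {S : Set (Fin d → ℝ)} {y v : Fin d → ℝ}
    (hS : ∀ s ∈ S, s ⬝ᵥ y = 0) (hv : v ∈ Submodule.span ℝ S) : v ⬝ᵥ y = 0 := by
  rw [← dotLM_apply]
  have hle : Submodule.span ℝ S ≤ LinearMap.ker (dotLM y) := by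
    rw [Submodule.span_le]
    intro s hs
    simp only [SetLike.mem_coe, LinearMap.mem_ker, dotLM_apply]
    exact hS s hs
  exact hle hv

lemma step_dir (a : ι → Fin d → ℝ) (b : ι → ℝ) (c : Fin d → ℝ) (x z : Fin d → ℝ)
    (hx : ∀ i, b i ≤ a i ⬝ᵥ x)
    (hzT : ∀ i, a i ⬝ᵥ x = b i → a i ⬝ᵥ z = 0)
    (hcz : c ⬝ᵥ z ≤ 0)
    (hJ : ∃ i, a i ⬝ᵥ z < 0) :
    ∃ x', (∀ i, b i ≤ a i ⬝ᵥ x') ∧ c ⬝ᵥ x' ≤ c ⬝ᵥ x ∧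
      Submodule.span ℝ (a '' {i | a i ⬝ᵥ x = b i}) <
        Submodule.span ℝ (a '' {i | a i ⬝ᵥ x' = b i}) := by
  obtain ⟨x', hx', hcx', hTsub, j, hjt, hjneg⟩ := move a b c x z hx hzT hcz hJ
  refine ⟨x', hx', hcx', ?_⟩
  have hle : Submodule.span ℝ (a '' {i | a i ⬝ᵥ x = b i}) ≤
      Submodule.span ℝ (a '' {i | a i ⬝ᵥ x' = b i}) :=
    Submodule.span_mono (Set.image_mono (fun i hi => hTsub i hi))
  refine lt_of_le_of_ne hle ?_
  intro heq
  have hmem : a j ∈ Submodule.span ℝ (a '' {i | a i ⬝ᵥ x = b i}) := by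
    rw [heq]
    exact Submodule.subset_span ⟨j, hjt, rfl⟩
  have : a j ⬝ᵥ z = 0 := by
    refine span_dot_zero ?_ hmem
    rintro s ⟨i, hi, rfl⟩
    exact hzT i hi
  linarith

lemma ray_contra (a : ι → Fin d → ℝ) (b : ι → ℝ) (c : Fin d → ℝ) (x z : Fin d → ℝ)
    (hx : ∀ i, b i ≤ a i ⬝ᵥ x)
    (hall : ∀ i, 0 ≤ a i ⬝ᵥ z) (hcz : c ⬝ᵥ z < 0)
    (hbdd : ∃ m, ∀ x, (∀ i, b i ≤ a i ⬝ᵥ x) → m ≤ c ⬝ᵥ x) : False := by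
  obtain ⟨m, hm⟩ := hbdd
  have hmx : m ≤ c ⬝ᵥ x := hm x hx
  have hu : c ⬝ᵥ z ≠ 0 := ne_of_lt hcz
  set s : ℝ := (c ⬝ᵥ x - m) / (-(c ⬝ᵥ z)) with hs
  have hs0 : 0 ≤ s := div_nonneg (by linarith) (by linarith)
  have hskey : s * (c ⬝ᵥ z) = -(c ⬝ᵥ x - m) := by
    rw [hs, div_neg, neg_mul, div_mul_cancel₀ _ hu]
  have hfeas : ∀ i, b i ≤ a i ⬝ᵥ (x + (s + 1) • z) := by
    intro i
    rw [dot_add_smul]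
    nlinarith [hx i, hall i]
  have h2 := hm _ hfeas
  rw [dot_add_smul] at h2
  have hexp : (s + 1) * (c ⬝ᵥ z) = s * (c ⬝ᵥ z) + c ⬝ᵥ z := by ring
  linarith

lemma step (a : ι → Fin d → ℝ) (b : ι → ℝ) (c : Fin d → ℝ)
    (hpointed : ∀ y : Fin d → ℝ, (∀ i, a i ⬝ᵥ y = 0) → y = 0)
    (hbdd : ∃ m, ∀ x, (∀ i, b i ≤ a i ⬝ᵥ x) → m ≤ c ⬝ᵥ x)
    (x : Fin d → ℝ) (hx : ∀ i, b i ≤ a i ⬝ᵥ x)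
    (hnt : Submodule.span ℝ (a '' {i | a i ⬝ᵥ x = b i}) ≠ ⊤) :
    ∃ x', (∀ i, b i ≤ a i ⬝ᵥ x') ∧ c ⬝ᵥ x' ≤ c ⬝ᵥ x ∧
      Submodule.span ℝ (a '' {i | a i ⬝ᵥ x = b i}) <
        Submodule.span ℝ (a '' {i | a i ⬝ᵥ x' = b i}) := by
  obtain ⟨y0, hy00, hy0T⟩ := exists_orth a {i | a i ⬝ᵥ x = b i} hnt
  -- normalize so that the objective derivative is nonpositive
  obtain ⟨y, hy0, hyT, hcy⟩ :
      ∃ y : Fin d → ℝ, y ≠ 0 ∧ (∀ i, a i ⬝ᵥ x = b i → a i ⬝ᵥ y = 0) ∧ c ⬝ᵥ y ≤ 0 := by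
    rcases le_or_gt (c ⬝ᵥ y0) 0 with h | h
    · exact ⟨y0, hy00, fun i hi => hy0T i hi, h⟩
    · refine ⟨-y0, neg_ne_zero.mpr hy00, fun i hi => ?_, ?_⟩
      · rw [dotProduct_neg, hy0T i hi, neg_zero]
      · rw [dotProduct_neg]; linarith
  by_cases hJ : ∃ i, a i ⬝ᵥ y < 0
  · exact step_dir a b c x y hx hyT hcy hJ
  · push_neg at hJ
    rcases lt_or_eq_of_le hcy with hlt | heq
    · exact (ray_contra a b c x y hx hJ hlt hbdd).elim
    · by_cases hJ2 : ∃ i, a i ⬝ᵥ (-y) < 0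
      · refine step_dir a b c x (-y) hx (fun i hi => ?_) ?_ hJ2
        · rw [dotProduct_neg, hyT i hi, neg_zero]
        · rw [dotProduct_neg, heq, neg_zero]
      · push_neg at hJ2
        exfalso
        apply hy0
        apply hpointed
        intro i
        have h1 := hJ i
        have h2 := hJ2 i
        rw [dotProduct_neg] at h2
        linarith

lemma finrank_fun_d : Module.finrank ℝ (Fin d → ℝ) = d := by
  simp [Module.finrank_pi]

lemma descent (a : ι → Fin d → ℝ) (b : ι → ℝ) (c : Fin d → ℝ)
    (hpointed : ∀ y : Fin d → ℝ, (∀ i, a i ⬝ᵥ y = 0) → y = 0)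
    (hbdd : ∃ m, ∀ x, (∀ i, b i ≤ a i ⬝ᵥ x) → m ≤ c ⬝ᵥ x) :
    ∀ (k : ℕ) (x : Fin d → ℝ), (∀ i, b i ≤ a i ⬝ᵥ x) →
      d - Module.finrank ℝ (Submodule.span ℝ (a '' {i | a i ⬝ᵥ x = b i})) ≤ k →
      ∃ v, (∀ i, b i ≤ a i ⬝ᵥ v) ∧ c ⬝ᵥ v ≤ c ⬝ᵥ x ∧
        Submodule.span ℝ (a '' {i | a i ⬝ᵥ v = b i}) = ⊤ := by
  intro k
  induction k with
  | zero =>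
    intro x hx h0
    refine ⟨x, hx, le_refl _, ?_⟩
    have hge : d ≤ Module.finrank ℝ (Submodule.span ℝ (a '' {i | a i ⬝ᵥ x = b i})) :=
      Nat.le_of_sub_eq_zero (Nat.le_zero.mp h0)
    have hle : Module.finrank ℝ (Submodule.span ℝ (a '' {i | a i ⬝ᵥ x = b i})) ≤ d := by
      have := Submodule.finrank_le (Submodule.span ℝ (a '' {i | a i ⬝ᵥ x = b i}))
      rwa [finrank_fun_d] at this
    apply Submodule.eq_top_of_finrank_eq
    rw [finrank_fun_d]
    omega
  | succ k ih =>
    intro x hx hk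
    by_cases htop : Submodule.span ℝ (a '' {i | a i ⬝ᵥ x = b i}) = ⊤
    · exact ⟨x, hx, le_refl _, htop⟩
    · obtain ⟨x', hx', hcx', hlt⟩ := step a b c hpointed hbdd x hx htop
      have hr : Module.finrank ℝ (Submodule.span ℝ (a '' {i | a i ⬝ᵥ x = b i})) <
          Module.finrank ℝ (Submodule.span ℝ (a '' {i | a i ⬝ᵥ x' = b i})) :=
        Submodule.finrank_lt_finrank_of_lt hlt
      obtain ⟨v, hv, hcv, hvtop⟩ := ih x' hx' (by omega)
      exact ⟨v, hv, le_trans hcv hcx', hvtop⟩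

theorem lp_vertex (a : ι → Fin d → ℝ) (b : ι → ℝ) (c : Fin d → ℝ)
    (hpointed : ∀ y : Fin d → ℝ, (∀ i, a i ⬝ᵥ y = 0) → y = 0)
    (hne : ∃ x, ∀ i, b i ≤ a i ⬝ᵥ x)
    (hbdd : ∃ m, ∀ x, (∀ i, b i ≤ a i ⬝ᵥ x) → m ≤ c ⬝ᵥ x) :
    ∃ x, (∀ i, b i ≤ a i ⬝ᵥ x) ∧ (∀ y, (∀ i, b i ≤ a i ⬝ᵥ y) → c ⬝ᵥ x ≤ c ⬝ᵥ y) ∧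
      Submodule.span ℝ (a '' {i | a i ⬝ᵥ x = b i}) = ⊤ := by
  classical
  set VS : Set (Fin d → ℝ) :=
    {x | (∀ i, b i ≤ a i ⬝ᵥ x) ∧ Submodule.span ℝ (a '' {i | a i ⬝ᵥ x = b i}) = ⊤} with hVS
  have hdes : ∀ x, (∀ i, b i ≤ a i ⬝ᵥ x) → ∃ v ∈ VS, c ⬝ᵥ v ≤ c ⬝ᵥ x := by
    intro x hx
    obtain ⟨v, hv1, hv2, hv3⟩ := descent a b c hpointed hbdd d x hx (Nat.sub_le _ _)
    exact ⟨v, ⟨hv1, hv3⟩, hv2⟩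
  obtain ⟨x0, hx0⟩ := hne
  obtain ⟨v0, hv0, _⟩ := hdes x0 hx0
  have hinj : Function.Injective
      (fun v : VS => Finset.univ.filter (fun i => a i ⬝ᵥ v.1 = b i)) := by
    rintro ⟨v1, hv1⟩ ⟨v2, hv2⟩ hT
    simp only [Subtype.mk.injEq]
    have hT' : {i | a i ⬝ᵥ v1 = b i} = {i | a i ⬝ᵥ v2 = b i} := by
      ext i
      have := Finset.ext_iff.mp hT i
      simpa using this
    have hdot : ∀ u : Fin d → ℝ, u ⬝ᵥ (v1 - v2) = 0 := by
      intro u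
      have hu : u ∈ Submodule.span ℝ (a '' {i | a i ⬝ᵥ v1 = b i}) := by
        rw [hv1.2]; trivial
      refine span_dot_zero ?_ hu
      rintro s ⟨i, hi, rfl⟩
      have h1 : a i ⬝ᵥ v1 = b i := hi
      have h2 : a i ⬝ᵥ v2 = b i := by
        have : i ∈ {i | a i ⬝ᵥ v2 = b i} := hT' ▸ hi
        exact this
      rw [dotProduct_sub, h1, h2, sub_self]
    funext j
    have := hdot (Pi.single j 1)
    rw [dotProduct_sub] at this
    simp only [Pi.single_apply, dotProduct] at this ⊢
    have h1 : ∀ w : Fin d → ℝ, (∑ i, (if i = j then (1:ℝ) else 0) * w i) = w j := by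
      intro w
      rw [Finset.sum_eq_single j]
      · simp
      · intro i _ hij; simp [hij]
      · intro h; exact absurd (Finset.mem_univ j) h
    rw [h1, h1] at this
    linarith
  have hfinVS : VS.Finite := by
    have : Finite VS := Finite.of_injective _ hinj
    exact Set.toFinite VS
  obtain ⟨v, hv, hmin⟩ := Set.exists_min_image VS (fun v => c ⬝ᵥ v) hfinVS ⟨v0, hv0⟩
  refine ⟨v, hv.1, ?_, hv.2⟩
  intro y hy
  obtain ⟨u, hu, hcu⟩ := hdes y hy
  exact le_trans (hmin u hu) hcu


/-- AM-GM bound for determinants of `±1` matrices. -/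
lemma det_sq_le {ι : Type} [Fintype ι] [DecidableEq ι] (M : Matrix ι ι ℝ)
    (h : ∀ i j, M i j = 1 ∨ M i j = -1) :
    M.det ^ 2 ≤ (Fintype.card ι : ℝ) ^ (Fintype.card ι) := by
  rcases isEmpty_or_nonempty ι with hE | hNE
  · simp [Matrix.det_isEmpty]
  set k := Fintype.card ι with hk
  have hk0 : 0 < k := Fintype.card_pos
  set G := M * Mᴴ with hG
  have hP : G.PosSemidef := Matrix.posSemidef_self_mul_conjTranspose M
  have hH : G.IsHermitian := hP.1
  set ev := hH.eigenvalues with hev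
  have hnn : ∀ i, 0 ≤ ev i := hP.eigenvalues_nonneg
  have hdet : G.det = ∏ i, ev i := by
    have := hH.det_eq_prod_eigenvalues
    simpa using this
  have htr : G.trace = ∑ i, ev i := by
    have h1 := hH.conjStarAlgAut_star_eigenvectorUnitary
    rw [Unitary.conjStarAlgAut_star_apply] at h1
    have h2 : ((star (hH.eigenvectorUnitary : Matrix ι ι ℝ)) * G *
        (hH.eigenvectorUnitary : Matrix ι ι ℝ)).trace = G.trace := by
      rw [Matrix.trace_mul_cycle]
      rw [← Matrix.mul_assoc]
      rw [(Matrix.mem_unitaryGroup_iff).mp hH.eigenvectorUnitary.2, Matrix.one_mul]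
    rw [h1] at h2
    rw [← h2]
    simp [Matrix.trace_diagonal, hev]
  have htr2 : G.trace = (k : ℝ) * k := by
    have hGd : ∀ i, G i i = (k : ℝ) := by
      intro i
      show (M * Mᴴ) i i = _
      rw [Matrix.mul_apply]
      have : ∀ j, M i j * Mᴴ j i = 1 := by
        intro j
        rw [Matrix.conjTranspose_apply, star_trivial]
        rcases h i j with h' | h' <;> rw [h'] <;> norm_num
      rw [Finset.sum_congr rfl (fun j _ => this j)]
      simp [hk]
    rw [Matrix.trace]
    have : ∀ i : ι, G.diag i = (k:ℝ) := fun i => hGd i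
    rw [Finset.sum_congr rfl (fun i _ => this i)]
    simp [hk, mul_comm]
  have hsum : ∑ i, ev i = (k:ℝ) * k := by rw [← htr, htr2]
  -- AM-GM
  have hprod : ∏ i, ev i ≤ (k:ℝ) ^ k := by
    have hkR : (0:ℝ) < k := by exact_mod_cast hk0
    have hw : ∑ _i : ι, (1/(k:ℝ)) = 1 := by
      rw [Finset.sum_const]
      have : (Finset.univ : Finset ι).card = k := by simp [hk]
      rw [this, nsmul_eq_mul]
      field_simp
    have hgm := Real.geom_mean_le_arith_mean_weighted Finset.univ
      (fun _ => 1/(k:ℝ)) ev (fun i _ => by positivity) hw (fun i _ => hnn i)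
    have hrhs : ∑ i, (1/(k:ℝ)) * ev i = (k:ℝ) := by
      rw [← Finset.mul_sum, hsum]
      field_simp
    rw [hrhs] at hgm
    -- hgm : ∏ i, ev i ^ (1/k) ≤ k
    have hlhs : ∏ i, ev i ^ (1/(k:ℝ)) = (∏ i, ev i) ^ (1/(k:ℝ)) := by
      rw [← Real.finset_prod_rpow Finset.univ ev (fun i _ => hnn i)]
    have hprod0 : 0 ≤ ∏ i, ev i := Finset.prod_nonneg (fun i _ => hnn i)
    have h1 : ((∏ i, ev i) ^ (1/(k:ℝ))) ^ (k:ℕ) ≤ (k:ℝ) ^ (k:ℕ) := by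
      apply pow_le_pow_left₀ (Real.rpow_nonneg hprod0 _)
      rw [← hlhs]; exact hgm
    have h2 : ((∏ i, ev i) ^ (1/(k:ℝ))) ^ (k:ℕ) = ∏ i, ev i := by
      rw [← Real.rpow_natCast ((∏ i, ev i) ^ (1/(k:ℝ))) k, ← Real.rpow_mul hprod0]
      rw [one_div, inv_mul_cancel₀ (by exact_mod_cast hk0.ne' : (k:ℝ) ≠ 0), Real.rpow_one]
    rw [h2] at h1
    exact h1
  have hdetM : M.det ^ 2 = G.det := by
    rw [hG, Matrix.det_mul, Matrix.det_conjTranspose, star_trivial, sq]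
  rw [hdetM, hdet]
  exact hprod

/-- Hadamard-type bound for `0/1` matrices of size `n+1`. -/
lemma det01_le {n : ℕ} (A : Matrix (Fin (n+1)) (Fin (n+1)) ℝ)
    (h : ∀ i j, A i j = 0 ∨ A i j = 1) :
    |A.det| ≤ ((n:ℝ) + 2) ^ (((n:ℝ) + 2) / 2) / 2 ^ (n + 1) := by
  classical
  -- border to a ±1 matrix of size n+2
  set Bm : Matrix (Fin 1) (Fin (n+1)) ℝ := Matrix.of fun _ _ => 1 with hBm
  set Cm : Matrix (Fin (n+1)) (Fin 1) ℝ := Matrix.of fun _ _ => 1 with hCm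
  set Dm : Matrix (Fin (n+1)) (Fin (n+1)) ℝ := Matrix.of fun i j => 1 - 2 * A i j with hDm
  set C : Matrix (Fin 1 ⊕ Fin (n+1)) (Fin 1 ⊕ Fin (n+1)) ℝ :=
    Matrix.fromBlocks (1 : Matrix (Fin 1) (Fin 1) ℝ) Bm Cm Dm with hC
  have hCpm : ∀ i j, C i j = 1 ∨ C i j = -1 := by
    rintro (i | i) (j | j)
    · left
      simp [hC, Matrix.fromBlocks, Matrix.one_apply, Subsingleton.elim i j]
    · left; simp [hC, hBm, Matrix.fromBlocks]
    · left; simp [hC, hCm, Matrix.fromBlocks]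
    · rcases h i j with h' | h'
      · left; simp [hC, hDm, Matrix.fromBlocks, h']
      · right; simp [hC, hDm, Matrix.fromBlocks, h']; ring
  have hcard : Fintype.card (Fin 1 ⊕ Fin (n+1)) = n + 2 := by
    simp [Fintype.card_sum]
    omega
  have hsq := det_sq_le C hCpm
  rw [hcard] at hsq
  have hdetC : C.det = (-2 : ℝ) ^ (n+1) * A.det := by
    haveI : Invertible (1 : Matrix (Fin 1) (Fin 1) ℝ) := invertibleOne
    rw [hC, Matrix.det_fromBlocks₁₁]
    rw [Matrix.det_one, one_mul, invOf_one, Matrix.mul_one]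
    have h2 : Dm - Cm * Bm = ((-2 : ℝ) • A) := by
      funext i j
      show Dm i j - (Cm * Bm) i j = ((-2:ℝ) • A) i j
      rw [Matrix.mul_apply]
      simp [hDm, hCm, hBm]
      try ring
    rw [h2, Matrix.det_smul]
    simp [Fintype.card_fin]
  -- |det C| = 2^(n+1) * |det A|
  have habs : |C.det| = 2 ^ (n+1) * |A.det| := by
    rw [hdetC, abs_mul, abs_pow, abs_neg]
    norm_num
  have hb0 : (0:ℝ) ≤ (n:ℝ) + 2 := by positivity
  have hCle : |C.det| ≤ ((n:ℝ) + 2) ^ (((n:ℝ) + 2) / 2) := by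
    have h1 : |C.det| = Real.sqrt (C.det ^ 2) := (Real.sqrt_sq_eq_abs _).symm
    rw [h1]
    have h2 : Real.sqrt ((↑(n + 2) : ℝ) ^ (n + 2)) = ((n:ℝ) + 2) ^ (((n:ℝ) + 2) / 2) := by
      rw [Real.sqrt_eq_rpow]
      rw [← Real.rpow_natCast ((↑(n+2):ℝ)) (n+2)]
      rw [← Real.rpow_mul (by positivity)]
      push_cast
      norm_num
      rw [mul_one_div]
    rw [← h2]
    exact Real.sqrt_le_sqrt hsq
  rw [habs] at hCle
  rw [le_div_iff₀ (by positivity : (0:ℝ) < 2 ^ (n+1))]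
  linarith


section Main

open Finset

variable {n : ℕ} (f : Finset (Fin n) → Bool)

/-- indicator row of a coalition (last coordinate is the `α` coordinate) -/
noncomputable def ind (S : Finset (Fin n)) : Fin (n+1) → ℝ :=
  fun j => Fin.lastCases (motive := fun _ => ℝ) 0 (fun i => if i ∈ S then (1:ℝ) else 0) j

/-- the `α` coordinate functional -/
noncomputable def elast : Fin (n+1) → ℝ :=
  fun j => if j = Fin.last n then (1:ℝ) else 0

noncomputable def rowA : Option (Finset (Fin n)) → Fin (n+1) → ℝ
  | none => elast
  | some S => if f S then ind S else elast - ind S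

noncomputable def rhsB : Option (Finset (Fin n)) → ℝ
  | none => 1
  | some S => if f S then 1 else 0

lemma elast_dot (x : Fin (n+1) → ℝ) : elast ⬝ᵥ x = x (Fin.last n) := by
  rw [dotProduct]
  rw [Finset.sum_eq_single (Fin.last n)]
  · simp [elast]
  · intro j _ hj; simp [elast, hj]
  · intro h; exact absurd (Finset.mem_univ _) h

lemma ind_castSucc (S : Finset (Fin n)) (i : Fin n) :
    ind S i.castSucc = if i ∈ S then (1:ℝ) else 0 := by
  simp [ind]

lemma ind_last (S : Finset (Fin n)) : ind S (Fin.last n) = 0 := by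
  simp [ind]

lemma ind_dot (S : Finset (Fin n)) (x : Fin (n+1) → ℝ) :
    ind S ⬝ᵥ x = ∑ i ∈ S, x i.castSucc := by
  rw [dotProduct, Fin.sum_univ_castSucc]
  rw [ind_last, zero_mul, add_zero]
  have h1 : ∀ i : Fin n, ind S i.castSucc * x i.castSucc
      = if i ∈ S then x i.castSucc else 0 := by
    intro i
    rw [ind_castSucc]
    by_cases h : i ∈ S <;> simp [h]
  rw [Finset.sum_congr rfl (fun i _ => h1 i)]
  rw [Finset.sum_ite_mem, Finset.univ_inter]

lemma ind_01 (S : Finset (Fin n)) (j : Fin (n+1)) : ind S j = 0 ∨ ind S j = 1 := by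
  refine Fin.lastCases ?_ ?_ j
  · left; exact ind_last S
  · intro i
    rw [ind_castSucc]
    by_cases h : i ∈ S
    · right; simp [h]
    · left; simp [h]

lemma elast_01 (j : Fin (n+1)) : elast (n := n) j = 0 ∨ elast (n := n) j = 1 := by
  unfold elast
  by_cases h : j = Fin.last n
  · right; simp [h]
  · left; simp [h]

/-- feasibility of the LP encodes rough weightedness -/
lemma feas_iff (x : Fin (n+1) → ℝ) :
    (∀ i, rhsB f i ≤ rowA f i ⬝ᵥ x) ↔
      (1 ≤ x (Fin.last n) ∧
        (∀ S, f S = true → 1 ≤ ∑ i ∈ S, x i.castSucc) ∧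
        (∀ S, f S = false → ∑ i ∈ S, x i.castSucc ≤ x (Fin.last n))) := by
  constructor
  · intro h
    refine ⟨?_, ?_, ?_⟩
    · have := h none
      rwa [rowA, rhsB, elast_dot] at this
    · intro S hS
      have := h (some S)
      rwa [rowA, rhsB, if_pos hS, if_pos hS, ind_dot] at this
    · intro S hS
      have := h (some S)
      rw [rowA, rhsB, if_neg (by simp [hS]), if_neg (by simp [hS]),
        sub_dotProduct, elast_dot, ind_dot] at this
      linarith
  · rintro ⟨h1, h2, h3⟩ i
    match i with
    | none => rw [rowA, rhsB, elast_dot]; exact h1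
    | some S =>
      rw [rowA, rhsB]
      by_cases hS : f S = true
      · rw [if_pos hS, if_pos hS, ind_dot]; exact h2 S hS
      · have hS' : f S = false := by simp at hS; exact hS
        rw [if_neg hS, if_neg hS, sub_dotProduct, elast_dot, ind_dot]
        have := h3 S hS'
        linarith

lemma pointed_rows (y : Fin (n+1) → ℝ) (h : ∀ i, rowA f i ⬝ᵥ y = 0) : y = 0 := by
  have hlast : y (Fin.last n) = 0 := by
    have := h none
    rwa [rowA, elast_dot] at this
  have hcast : ∀ i : Fin n, y i.castSucc = 0 := by
    intro i
    have := h (some {i})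
    rw [rowA] at this
    by_cases hf : f {i} = true
    · rw [if_pos hf, ind_dot] at this
      simpa using this
    · rw [if_neg hf, sub_dotProduct, elast_dot, ind_dot, hlast] at this
      simpa using this
  funext j
  refine Fin.lastCases ?_ ?_ j
  · exact hlast
  · intro i; exact hcast i

lemma feas_nonempty (hf : f ∅ = false) :
    ∃ x, ∀ i, rhsB f i ≤ rowA f i ⬝ᵥ x := by
  refine ⟨fun j => Fin.lastCases (motive := fun _ => ℝ) ((n:ℝ)+1) (fun _ => 1) j, ?_⟩
  rw [feas_iff]
  refine ⟨by simp, ?_, ?_⟩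
  · intro S hS
    have hSne : S.Nonempty := by
      rcases S.eq_empty_or_nonempty with h | h
      · rw [h] at hS; rw [hS] at hf; exact absurd hf (by simp)
      · exact h
    have : ∑ i ∈ S, (fun j => Fin.lastCases (motive := fun _ => ℝ) ((n:ℝ)+1)
        (fun _ => 1) j) i.castSucc = (S.card : ℝ) := by
      simp
    rw [this]
    exact_mod_cast Nat.one_le_iff_ne_zero.mpr (Finset.card_ne_zero_of_mem hSne.choose_spec)
  · intro S _
    have h1 : ∑ i ∈ S, (fun j => Fin.lastCases (motive := fun _ => ℝ) ((n:ℝ)+1)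
        (fun _ => 1) j) i.castSucc = (S.card : ℝ) := by
      simp
    have h2 : (S.card : ℝ) ≤ n := by
      exact_mod_cast S.card_le_univ.trans_eq (by simp)
    simp only [h1]
    simp
    linarith

lemma feas_bdd :
    ∃ m, ∀ x, (∀ i, rhsB f i ≤ rowA f i ⬝ᵥ x) → m ≤ elast ⬝ᵥ x := by
  exact ⟨1, fun x hx => by simpa [rowA, rhsB] using hx none⟩

lemma det_int {m : ℕ} (M : Matrix (Fin m) (Fin m) ℝ)
    (h : ∀ i j, ∃ z : ℤ, M i j = (z : ℝ)) : ∃ z : ℤ, M.det = (z : ℝ) := by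
  choose Z hZ using h
  refine ⟨(Matrix.of Z).det, ?_⟩
  have hM : M = (Matrix.of Z).map (Int.cast : ℤ → ℝ) := by
    funext i j
    simp [Matrix.map_apply, hZ i j, Matrix.of_apply]
  rw [hM]
  have : (Matrix.of Z).map (Int.cast : ℤ → ℝ) = (Int.castRingHom ℝ).mapMatrix (Matrix.of Z) := by
    rw [RingHom.mapMatrix_apply]
    norm_num
  rw [this, ← RingHom.map_det]
  simp

lemma rowA_int (i : Option (Finset (Fin n))) (j : Fin (n+1)) :
    ∃ z : ℤ, rowA f i j = (z : ℝ) := by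
  match i with
  | none =>
    rcases elast_01 (n := n) j with h | h
    · exact ⟨0, by rw [rowA, h]; simp⟩
    · exact ⟨1, by rw [rowA, h]; simp⟩
  | some S =>
    rw [rowA]
    by_cases hfS : f S
    · rw [if_pos hfS]
      rcases ind_01 S j with h | h
      · exact ⟨0, by rw [h]; simp⟩
      · exact ⟨1, by rw [h]; simp⟩
    · rw [if_neg hfS]
      rcases elast_01 (n := n) j with h1 | h1 <;> rcases ind_01 S j with h2 | h2
      · exact ⟨0, by rw [Pi.sub_apply, h1, h2]; simp⟩
      · exact ⟨-1, by rw [Pi.sub_apply, h1, h2]; simp⟩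
      · exact ⟨1, by rw [Pi.sub_apply, h1, h2]; simp⟩
      · exact ⟨0, by rw [Pi.sub_apply, h1, h2]; simp⟩

lemma rhsB_01 (i : Option (Finset (Fin n))) : rhsB f i = 0 ∨ rhsB f i = 1 := by
  match i with
  | none => right; rfl
  | some S =>
    rw [rhsB]
    by_cases hfS : f S
    · right; rw [if_pos hfS]
    · left; rw [if_neg hfS]

lemma vertex_data (hf : f ∅ = false) :
    ∃ (x : Fin (n+1) → ℝ) (g : Fin (n+1) → Option (Finset (Fin n))),
      (∀ i, rhsB f i ≤ rowA f i ⬝ᵥ x) ∧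
      (∀ y, (∀ i, rhsB f i ≤ rowA f i ⬝ᵥ y) → x (Fin.last n) ≤ y (Fin.last n)) ∧
      (∀ k, rowA f (g k) ⬝ᵥ x = rhsB f (g k)) ∧
      (Matrix.of (fun k j => rowA f (g k) j)).det ≠ 0 := by
  classical
  obtain ⟨x, hx, hmin, hspan⟩ := lp_vertex (rowA f) (rhsB f) elast
    (pointed_rows f) (feas_nonempty f hf) (feas_bdd f)
  obtain ⟨t, hts, htsp, htli⟩ := exists_linearIndependent ℝ
    (rowA f '' {i | rowA f i ⬝ᵥ x = rhsB f i})
  rw [hspan] at htsp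
  have htfin : t.Finite := htli.setFinite
  haveI := htfin.fintype
  have hcard : Fintype.card t = n + 1 := by
    have h1 := finrank_span_set_eq_card htli
    rw [htsp, finrank_top] at h1
    rw [finrank_fun_d, Set.toFinset_card] at h1
    omega
  let e : Fin (n+1) ≃ t := (Fintype.equivFinOfCardEq hcard).symm
  have hmem : ∀ k, ((e k : t) : Fin (n+1) → ℝ) ∈
      rowA f '' {i | rowA f i ⬝ᵥ x = rhsB f i} := fun k => hts (e k).2
  choose g hg1 hg2 using hmem
  refine ⟨x, g, hx, (fun y hy => by
    have := hmin y hy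
    rwa [elast_dot, elast_dot] at this), fun k => hg1 k, ?_⟩
  intro hdet
  obtain ⟨v, hv0, hvm⟩ := Matrix.exists_vecMul_eq_zero_iff.mpr hdet
  have hli2 : LinearIndependent ℝ (fun k : Fin (n+1) => ((e k : t) : Fin (n+1) → ℝ)) :=
    htli.comp (fun k => e k) (fun k1 k2 h12 => e.injective (Subtype.ext (congrArg _ h12)))
  have hzero : ∑ k, v k • ((e k : t) : Fin (n+1) → ℝ) = 0 := by
    funext j
    have h1 := congrFun hvm j
    simp only [Matrix.vecMul, dotProduct, Matrix.of_apply, Pi.zero_apply] at h1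
    simp only [Finset.sum_apply, Pi.smul_apply, smul_eq_mul, Pi.zero_apply]
    rw [← h1]
    apply Finset.sum_congr rfl
    intro k _
    rw [hg2 k]
  have := Fintype.linearIndependent_iff.mp hli2 v hzero
  apply hv0
  funext k
  exact this k

lemma rat_step (zD zB : ℤ) (μ : ℝ) (hB : (zB:ℝ) ≠ 0) (heq : (zB:ℝ) * μ = (zD:ℝ))
    (hμ : 1 ≤ μ) :
    ∃ p q : ℕ, 1 ≤ q ∧ q ≤ p ∧ Nat.Coprime p q ∧ p ≤ zD.natAbs ∧ μ = (p:ℝ)/(q:ℝ) := by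
  classical
  set P : ℤ := if 0 < zB then zD else -zD with hP
  set Q : ℤ := if 0 < zB then zB else -zB with hQ
  have hzB : zB ≠ 0 := by exact_mod_cast hB
  have hQ0 : 0 < Q := by
    rw [hQ]
    rcases lt_trichotomy zB 0 with h | h | h
    · rw [if_neg (by omega)]; omega
    · omega
    · rw [if_pos h]; omega
  have heq2 : (Q:ℝ) * μ = (P:ℝ) := by
    rw [hP, hQ]
    by_cases h : 0 < zB
    · rw [if_pos h, if_pos h]; exact heq
    · rw [if_neg h, if_neg h]; push_cast; linarith
  have hQR : (0:ℝ) < (Q:ℝ) := by exact_mod_cast hQ0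
  have hPQR : (Q:ℝ) ≤ (P:ℝ) := by nlinarith
  have hP0 : 0 < P := by
    have : (0:ℝ) < (P:ℝ) := lt_of_lt_of_le hQR hPQR
    exact_mod_cast this
  have hPabs : P.natAbs = zD.natAbs := by
    rw [hP]
    by_cases h : 0 < zB
    · rw [if_pos h]
    · rw [if_neg h]; exact Int.natAbs_neg zD
  set p0 : ℕ := P.toNat with hp0
  set q0 : ℕ := Q.toNat with hq0
  have hp0P : (p0:ℤ) = P := Int.toNat_of_nonneg hP0.le
  have hq0Q : (q0:ℤ) = Q := Int.toNat_of_nonneg hQ0.le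
  have hp0pos : 0 < p0 := by omega
  have hq0pos : 0 < q0 := by omega
  have hq0p0 : q0 ≤ p0 := by
    have : Q ≤ P := by exact_mod_cast hPQR
    omega
  set G : ℕ := Nat.gcd p0 q0 with hG
  have hGpos : 0 < G := Nat.gcd_pos_of_pos_left _ hp0pos
  refine ⟨p0 / G, q0 / G, ?_, ?_, Nat.coprime_div_gcd_div_gcd hGpos, ?_, ?_⟩
  · exact Nat.div_pos (Nat.le_of_dvd hq0pos (Nat.gcd_dvd_right _ _)) hGpos
  · exact Nat.div_le_div_right hq0p0
  · calc p0 / G ≤ p0 := Nat.div_le_self _ _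
    _ = P.natAbs := by omega
    _ = zD.natAbs := hPabs
  · have hdvdp : G ∣ p0 := Nat.gcd_dvd_left _ _
    have hdvdq : G ∣ q0 := Nat.gcd_dvd_right _ _
    have h1 : (p0 / G) * G = p0 := Nat.div_mul_cancel hdvdp
    have h2 : (q0 / G) * G = q0 := Nat.div_mul_cancel hdvdq
    have hμPQ : μ = (P:ℝ) / (Q:ℝ) := by
      field_simp at heq2 ⊢
      linarith
    have hGne : (G:ℝ) ≠ 0 := by exact_mod_cast hGpos.ne'
    have e1 : (P:ℝ) = ((p0/G : ℕ):ℝ) * (G:ℝ) := by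
      calc (P:ℝ) = ((p0:ℕ):ℝ) := by exact_mod_cast hp0P.symm
      _ = (((p0/G)*G : ℕ):ℝ) := by rw [h1]
      _ = ((p0/G : ℕ):ℝ) * (G:ℝ) := by push_cast; ring
    have e2 : (Q:ℝ) = ((q0/G : ℕ):ℝ) * (G:ℝ) := by
      calc (Q:ℝ) = ((q0:ℕ):ℝ) := by exact_mod_cast hq0Q.symm
      _ = (((q0/G)*G : ℕ):ℝ) := by rw [h2]
      _ = ((q0/G : ℕ):ℝ) * (G:ℝ) := by push_cast; ring
    rw [hμPQ, e1, e2, mul_div_mul_right _ _ hGne]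

end Main

end CTRB

open Finset

/-- `f` is `α`-roughly weighted: there are real weights such that every winning
coalition has weight at least `1` and every losing coalition weight at most `α`. -/
def RoughlyWeighted {n : ℕ} (f : Finset (Fin n) → Bool) (α : ℝ) : Prop :=
  ∃ w : Fin n → ℝ,
    (∀ S : Finset (Fin n), f S = true → 1 ≤ ∑ i ∈ S, w i) ∧
    (∀ S : Finset (Fin n), f S = false → ∑ i ∈ S, w i ≤ α)

/-- The critical threshold value `μ(f)`: the smallest `α ≥ 1` such that `f` is
`α`-roughly weighted. -/
noncomputable def mu {n : ℕ} (f : Finset (Fin n) → Bool) : ℝ :=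
  sInf {α : ℝ | 1 ≤ α ∧ RoughlyWeighted f α}

/-- A simple game: monotone, the empty coalition loses and the grand coalition wins. -/
def SimpleGame {n : ℕ} (χ : Finset (Fin n) → Bool) : Prop :=
  χ ∅ = false ∧ χ Finset.univ = true ∧
    ∀ S T : Finset (Fin n), S ⊆ T → χ S = true → χ T = true

/-- the critical threshold value is a rational number `p/q` with
coprime `1 ≤ q ≤ p ≤ ⌊(n+2)^((n+2)/2) / 2^(n+1)⌋` (Hadamard-type bound). -/
theorem critical_threshold_rational_bounded (n : ℕ)
    (f : Finset (Fin n) → Bool) (hf : f ∅ = false) :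
    ∃ p q : ℕ, 1 ≤ q ∧ q ≤ p ∧ Nat.Coprime p q ∧
      p ≤ Nat.floor (((n : ℝ) + 2) ^ (((n : ℝ) + 2) / 2) / 2 ^ (n + 1)) ∧
      mu f = (p : ℝ) / (q : ℝ) := by
  classical
  obtain ⟨x, g, hx, hmin, htight, hdet⟩ := CTRB.vertex_data f hf
  set μ := x (Fin.last n) with hμdef
  have hfeas := (CTRB.feas_iff f x).mp hx
  have hμ1 : 1 ≤ μ := hfeas.1
  -- `mu f` equals the optimal value of the vertex
  have hmu : mu f = μ := by
    rw [mu]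
    apply IsLeast.csInf_eq
    constructor
    · exact ⟨hμ1, ⟨fun i => x i.castSucc, hfeas.2.1, hfeas.2.2⟩⟩
    · rintro α ⟨hα1, w, hw1, hw2⟩
      set y : Fin (n+1) → ℝ := fun j => Fin.lastCases (motive := fun _ => ℝ) α w j with hy
      have hylast : y (Fin.last n) = α := by simp [hy]
      have hycast : ∀ i : Fin n, y i.castSucc = w i := by intro i; simp [hy]
      have hyfeas : ∀ i, CTRB.rhsB f i ≤ CTRB.rowA f i ⬝ᵥ y := by
        rw [CTRB.feas_iff]
        refine ⟨by rw [hylast]; exact hα1, ?_, ?_⟩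
        · intro S hS
          rw [Finset.sum_congr rfl (fun i _ => hycast i)]
          exact hw1 S hS
        · intro S hS
          rw [Finset.sum_congr rfl (fun i _ => hycast i), hylast]
          exact hw2 S hS
      have := hmin y hyfeas
      rwa [hylast] at this
  set B : Matrix (Fin (n+1)) (Fin (n+1)) ℝ :=
    Matrix.of (fun k j => CTRB.rowA f (g k) j) with hB
  set β : Fin (n+1) → ℝ := fun k => CTRB.rhsB f (g k) with hβ
  -- Cramer's rule
  have hmul : B *ᵥ x = β := by
    funext k
    exact htight k
  have hcr : B.det * μ = (B.updateCol (Fin.last n) β).det := by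
    have h2 : B.adjugate *ᵥ (B *ᵥ x) = B.det • x := by
      rw [Matrix.mulVec_mulVec, Matrix.adjugate_mul, Matrix.smul_mulVec,
        Matrix.one_mulVec]
    rw [hmul] at h2
    have h3 : B.det • x = Matrix.cramer B β := by
      rw [← h2, Matrix.cramer_eq_adjugate_mulVec]
    have h4 := congrFun h3 (Fin.last n)
    simp only [Pi.smul_apply, smul_eq_mul] at h4
    rw [← Matrix.cramer_apply]
    exact h4
  set D := B.updateCol (Fin.last n) β with hD
  set ε : Fin (n+1) → ℝ := fun k => (g k).elim 1 (fun S => if f S then 1 else -1) with hε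
  set D' := Matrix.diagonal ε * D with hD'
  have hD'apply : ∀ k j, D' k j = ε k * D k j := by
    intro k j
    rw [hD']
    exact Matrix.diagonal_mul ε D k j
  have hDapply : ∀ k j, D k j = if j = Fin.last n then β k else B k j := by
    intro k j
    rw [hD]
    exact Matrix.updateCol_apply
  have hD'01 : ∀ k j, D' k j = 0 ∨ D' k j = 1 := by
    intro k j
    rw [hD'apply k j, hDapply k j]
    rcases hgk : g k with _ | S
    · have hek : ε k = 1 := by rw [hε]; simp [hgk]
      rw [hek, one_mul]
      by_cases hj : j = Fin.last n
      · rw [if_pos hj]; right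
        show CTRB.rhsB f (g k) = 1
        rw [hgk]; rfl
      · rw [if_neg hj]; left
        show CTRB.rowA f (g k) j = 0
        rw [hgk, CTRB.rowA]
        simp [CTRB.elast, hj]
    · by_cases hfS : f S
      · have hek : ε k = 1 := by rw [hε]; simp [hgk, hfS]
        rw [hek, one_mul]
        by_cases hj : j = Fin.last n
        · rw [if_pos hj]; right
          show CTRB.rhsB f (g k) = 1
          rw [hgk, CTRB.rhsB, if_pos hfS]
        · rw [if_neg hj]
          show CTRB.rowA f (g k) j = 0 ∨ CTRB.rowA f (g k) j = 1
          rw [hgk, CTRB.rowA, if_pos hfS]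
          exact CTRB.ind_01 S j
      · have hek : ε k = -1 := by rw [hε]; simp [hgk, hfS]
        rw [hek]
        by_cases hj : j = Fin.last n
        · rw [if_pos hj]; left
          have : β k = 0 := by
            show CTRB.rhsB f (g k) = 0
            rw [hgk, CTRB.rhsB, if_neg (by simp [hfS])]
          rw [this, mul_zero]
        · rw [if_neg hj]
          have hBkj : B k j = CTRB.elast j - CTRB.ind S j := by
            show CTRB.rowA f (g k) j = _
            rw [hgk, CTRB.rowA, if_neg (by simp [hfS])]
            rfl
          have helj : CTRB.elast (n := n) j = 0 := by simp [CTRB.elast, hj]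
          rw [hBkj, helj, zero_sub]
          rcases CTRB.ind_01 S j with h | h
          · left; rw [h]; ring
          · right; rw [h]; ring
  -- bound on |D.det|
  have hb := CTRB.det01_le D' hD'01
  have hDD' : D'.det = (∏ k, ε k) * D.det := by
    rw [hD', Matrix.det_mul, Matrix.det_diagonal]
  have hεpm : ∀ k, |ε k| = 1 := by
    intro k
    rw [hε]
    rcases hgk : g k with _ | S
    · simp [hgk]
    · by_cases hfS : f S <;> simp [hgk, hfS]
  have habs : |D.det| = |D'.det| := by
    rw [hDD', abs_mul, Finset.abs_prod]
    rw [Finset.prod_congr rfl (fun k _ => hεpm k), Finset.prod_const_one, one_mul]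
  have hDbound : |D.det| ≤ ((n:ℝ) + 2) ^ (((n:ℝ) + 2) / 2) / 2 ^ (n + 1) := by
    rw [habs]; exact hb
  -- integrality
  obtain ⟨zB, hzB⟩ := CTRB.det_int B (fun k j => CTRB.rowA_int f (g k) j)
  obtain ⟨zD, hzD⟩ := CTRB.det_int D (by
    intro k j
    rw [hDapply k j]
    by_cases hj : j = Fin.last n
    · rw [if_pos hj]
      rcases CTRB.rhsB_01 f (g k) with h | h
      · exact ⟨0, by show CTRB.rhsB f (g k) = _; rw [h]; simp⟩
      · exact ⟨1, by show CTRB.rhsB f (g k) = _; rw [h]; simp⟩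
    · rw [if_neg hj]
      exact CTRB.rowA_int f (g k) j)
  have hzB0 : (zB:ℝ) ≠ 0 := by rw [← hzB]; exact hdet
  have heq : (zB:ℝ) * μ = (zD:ℝ) := by rw [← hzB, ← hzD]; exact hcr
  obtain ⟨p, q, hq1, hqp, hcop, hple, hμpq⟩ := CTRB.rat_step zD zB μ hzB0 heq hμ1
  refine ⟨p, q, hq1, hqp, hcop, ?_, by rw [hmu, hμpq]⟩
  have h1 : ((zD.natAbs : ℕ):ℝ) ≤ ((n:ℝ) + 2) ^ (((n:ℝ) + 2) / 2) / 2 ^ (n + 1) := by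
    have : ((zD.natAbs : ℕ):ℝ) = |(zD:ℝ)| := by
      rw [Nat.cast_natAbs]
      exact Int.cast_abs
    rw [this, ← hzD]
    exact hDbound
  exact le_trans hple (Nat.le_floor h1)
end

section
/- For every integer k ≥ 2 there exists a strong simple game χ on n = 2k voters with μ(χ) ≥ k/2; that is, χ is not α-roughly weighted for any real α with 1 ≤ α < k/2. -/
open Finset

/-- A simple game is strong if the complement of every losing coalition is winning. -/
def Strong {n : ℕ} (χ : Finset (Fin n) → Bool) : Prop :=
  ∀ S : Finset (Fin n), χ S = false → χ Sᶜ = true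

namespace SG

def m (k : ℕ) : ℕ := 2 * ((k - 1) / 2) + 1

lemma m_le (k : ℕ) (hk : 1 ≤ k) : m k ≤ k := by unfold m; omega
lemma m_odd (k : ℕ) : Odd (m k) := ⟨(k-1)/2, by unfold m; omega⟩
lemma m_ge3 (k : ℕ) (hk : 3 ≤ k) : 3 ≤ m k := by unfold m; omega
lemma m_pos (k : ℕ) : 0 < m k := by unfold m; omega

def e (k : ℕ) (j : Fin k) (b : Bool) : Fin (2 * k) :=
  ⟨2 * j.val + (if b then 1 else 0), by have := j.isLt; cases b <;> simp <;> omega⟩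

lemma e_inj {k : ℕ} {j j' : Fin k} {b b' : Bool} (h : e k j b = e k j' b') :
    j = j' ∧ b = b' := by
  have hv : 2 * j.val + (if b then 1 else 0) = 2 * j'.val + (if b' then 1 else 0) :=
    congrArg Fin.val h
  cases b <;> cases b' <;> simp_all <;> [skip; omega; omega; skip] <;>
    exact Fin.ext (by omega)

lemma e_ne {k : ℕ} (j : Fin k) : e k j false ≠ e k j true := by
  intro h; exact absurd (e_inj h).2 (by simp)

lemma exists_e {k : ℕ} (i : Fin (2 * k)) :
    ∃ j : Fin k, ∃ b : Bool, i = e k j b := by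
  have hi := i.isLt
  refine ⟨⟨i.val / 2, by omega⟩, decide (i.val % 2 = 1), ?_⟩
  apply Fin.ext
  by_cases h : i.val % 2 = 1 <;> simp [e, h] <;> omega

def T (k : ℕ) (v : Fin k → Bool) : Finset (Fin (2 * k)) :=
  Finset.image (fun j => e k j (v j)) Finset.univ

lemma e_mem_T {k : ℕ} {j : Fin k} {b : Bool} {v : Fin k → Bool} :
    e k j b ∈ T k v ↔ v j = b := by
  simp only [T, mem_image, mem_univ, true_and]
  constructor
  · rintro ⟨j', h⟩
    obtain ⟨rfl, rfl⟩ := e_inj h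
    rfl
  · rintro rfl; exact ⟨j, rfl⟩

lemma T_inj {k : ℕ} {v v' : Fin k → Bool} (h : T k v = T k v') : v = v' := by
  funext j
  have : e k j (v j) ∈ T k v' := h ▸ e_mem_T.mpr rfl
  exact (e_mem_T.mp this).symm

def cnt (k : ℕ) (v : Fin k → Bool) : ℕ :=
  (Finset.univ.filter (fun j : Fin k => j.val < m k ∧ v j = true)).card

def chi (k : ℕ) (S : Finset (Fin (2 * k))) : Bool :=
  decide ((∃ j : Fin k, e k j false ∈ S ∧ e k j true ∈ S) ∨
    ∃ v : Fin k → Bool, S = T k v ∧ Even (cnt k v))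

lemma chi_true_iff {k : ℕ} (S : Finset (Fin (2 * k))) :
    chi k S = true ↔ ((∃ j : Fin k, e k j false ∈ S ∧ e k j true ∈ S) ∨
    ∃ v : Fin k → Bool, S = T k v ∧ Even (cnt k v)) := by
  simp [chi]

lemma chi_false_iff {k : ℕ} (S : Finset (Fin (2 * k))) :
    chi k S = false ↔ ¬ ((∃ j : Fin k, e k j false ∈ S ∧ e k j true ∈ S) ∨
    ∃ v : Fin k → Bool, S = T k v ∧ Even (cnt k v)) := by
  rw [← chi_true_iff]
  cases h : chi k S <;> simp

-- parity flip under complement of v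
lemma card_A {k : ℕ} (hk : 1 ≤ k) :
    (Finset.univ.filter (fun j : Fin k => j.val < m k)).card = m k := by
  have hmap : Finset.univ.filter (fun j : Fin k => j.val < m k) =
      Finset.map ⟨Fin.castLE (m_le k hk), Fin.castLE_injective _⟩ Finset.univ := by
    ext j
    simp only [mem_filter, mem_univ, true_and, Finset.mem_map, Function.Embedding.coeFn_mk]
    constructor
    · intro hj; exact ⟨⟨j.val, hj⟩, Fin.ext rfl⟩
    · rintro ⟨x, rfl⟩; exact x.isLt
  rw [hmap, Finset.card_map, Finset.card_univ, Fintype.card_fin]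

lemma cnt_add_cnt_not {k : ℕ} (hk : 1 ≤ k) (v : Fin k → Bool) :
    cnt k v + cnt k (fun j => !v j) = m k := by
  unfold cnt
  have h1 : (Finset.univ.filter (fun j : Fin k => j.val < m k ∧ v j = true)) ∪
      (Finset.univ.filter (fun j : Fin k => j.val < m k ∧ (!v j) = true)) =
      Finset.univ.filter (fun j : Fin k => j.val < m k) := by
    ext j; simp only [mem_union, mem_filter, mem_univ, true_and, Bool.not_eq_true']
    cases h : v j <;> simp [h]
  have h2 : Disjoint (Finset.univ.filter (fun j : Fin k => j.val < m k ∧ v j = true))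
      (Finset.univ.filter (fun j : Fin k => j.val < m k ∧ (!v j) = true)) := by
    rw [Finset.disjoint_left]
    intro j hj hj'
    simp only [mem_filter, Bool.not_eq_true'] at hj hj'
    rw [hj.2.2] at hj'
    simp at hj'
  rw [← Finset.card_union_of_disjoint h2, h1, card_A hk]

lemma chi_empty {k : ℕ} (hk : 0 < k) : chi k (∅ : Finset (Fin (2*k))) = false := by
  rw [chi_false_iff]
  rintro (⟨j, hj, -⟩ | ⟨v, hv, -⟩)
  · simp at hj
  · have : e k ⟨0, hk⟩ (v ⟨0, hk⟩) ∈ T k v := e_mem_T.mpr rfl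
    rw [← hv] at this; simp at this

lemma chi_univ {k : ℕ} (hk : 0 < k) : chi k (Finset.univ : Finset (Fin (2*k))) = true := by
  rw [chi_true_iff]
  exact Or.inl ⟨⟨0, hk⟩, mem_univ _, mem_univ _⟩

lemma chi_mono {k : ℕ} (S U : Finset (Fin (2*k))) (hSU : S ⊆ U) (hS : chi k S = true) :
    chi k U = true := by
  rw [chi_true_iff] at hS ⊢
  rcases hS with ⟨j, h1, h2⟩ | ⟨v, rfl, hv⟩
  · exact Or.inl ⟨j, hSU h1, hSU h2⟩
  · by_cases hEq : U = T k v
    · exact Or.inr ⟨v, hEq, hv⟩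
    · have hss : T k v ⊂ U := Finset.ssubset_iff_subset_ne.mpr ⟨hSU, Ne.symm hEq⟩
      obtain ⟨i, hiU, hiT⟩ := exists_of_ssubset hss
      obtain ⟨j, b, rfl⟩ := exists_e i
      have hvj : v j = !b := by
        cases b <;> cases h : v j <;> simp_all [e_mem_T]
      have h2 : e k j (!b) ∈ U := hSU (e_mem_T.mpr hvj)
      cases b
      · exact Or.inl ⟨j, hiU, by simpa using h2⟩
      · exact Or.inl ⟨j, by simpa using h2, hiU⟩

lemma chi_strong {k : ℕ} (hk : 0 < k) (S : Finset (Fin (2*k))) (hS : chi k S = false) :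
    chi k Sᶜ = true := by
  rw [chi_false_iff] at hS
  push_neg at hS
  obtain ⟨hpair, htrans⟩ := hS
  rw [chi_true_iff]
  by_cases hmiss : ∃ j : Fin k, e k j false ∉ S ∧ e k j true ∉ S
  · obtain ⟨j, h1, h2⟩ := hmiss
    exact Or.inl ⟨j, mem_compl.mpr h1, mem_compl.mpr h2⟩
  · push_neg at hmiss
    set v : Fin k → Bool := fun j => decide (e k j true ∈ S) with hv
    have hSeq : S = T k v := by
      ext i
      obtain ⟨j, b, rfl⟩ := exists_e i
      rw [e_mem_T]
      cases b
      · simp only [hv, decide_eq_false_iff_not]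
        constructor
        · intro h ht
          exact hpair j h ht
        · intro h
          by_contra hf
          exact h (hmiss j hf)
      · simp [hv]
    have hodd : Odd (cnt k v) := Nat.not_even_iff_odd.mp (htrans v hSeq)
    have hcompl : Sᶜ = T k (fun j => !v j) := by
      ext i
      obtain ⟨j, b, rfl⟩ := exists_e i
      rw [mem_compl, hSeq, e_mem_T, e_mem_T]
      cases h : v j <;> cases b <;> simp
    refine Or.inr ⟨fun j => !v j, hcompl, ?_⟩
    have hsum := cnt_add_cnt_not hk v
    have hm := m_odd k
    rw [Nat.odd_iff] at hodd hm
    rw [Nat.even_iff]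
    omega

lemma chi_pair {k : ℕ} (j : Fin k) :
    chi k ({e k j false, e k j true} : Finset (Fin (2*k))) = true := by
  rw [chi_true_iff]
  exact Or.inl ⟨j, by simp, by simp⟩

lemma chi_T_odd {k : ℕ} (v : Fin k → Bool) (hv : Odd (cnt k v)) :
    chi k (T k v) = false := by
  rw [chi_false_iff]
  rintro (⟨j, h1, h2⟩ | ⟨v', heq, hev⟩)
  · rw [e_mem_T] at h1 h2
    rw [h1] at h2; simp at h2
  · rw [T_inj heq] at hv
    exact (Nat.not_even_iff_odd.mpr hv) hev

lemma sum_T {k : ℕ} (v : Fin k → Bool) (w : Fin (2*k) → ℝ) :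
    ∑ i ∈ T k v, w i = ∑ j : Fin k, w (e k j (v j)) := by
  rw [T, Finset.sum_image]
  intro x _ y _ h
  exact (e_inj h).1

lemma key {k : ℕ} (hk : 2 ≤ k) {α : ℝ} (hα : 1 ≤ α)
    (w : Fin (2*k) → ℝ)
    (hwin : ∀ S, chi k S = true → 1 ≤ ∑ i ∈ S, w i)
    (hlose : ∀ S, chi k S = false → ∑ i ∈ S, w i ≤ α) :
    (k : ℝ) / 2 ≤ α := by
  rcases eq_or_lt_of_le hk with hk2 | hk3
  · rw [← hk2]; norm_num; exact hα
  have hk3 : 3 ≤ k := hk3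
  have hk1 : 0 < k := by omega
  set f : Fin k → ℝ := fun j => w (e k j false) with hf
  set t : Fin k → ℝ := fun j => w (e k j true) with ht
  -- each pair has weight ≥ 1
  have hs : ∀ j : Fin k, 1 ≤ f j + t j := by
    intro j
    have := hwin _ (chi_pair j)
    rwa [Finset.sum_pair (e_ne j)] at this
  set mx : Fin k → ℝ := fun j => max (f j) (t j) with hmx
  set mn : Fin k → ℝ := fun j => min (f j) (t j) with hmn
  set d : Fin k → ℝ := fun j => mx j - mn j with hd
  have hd0 : ∀ j, 0 ≤ d j := fun j => by
    simp only [hd, sub_nonneg, hmx, hmn]; exact min_le_max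
  have hmxmn : ∀ j, mx j + mn j = f j + t j := fun j => max_add_min _ _
  set vs : Fin k → Bool := fun j => decide (f j < t j) with hvs
  have hwvs : ∀ j, w (e k j (vs j)) = mx j := by
    intro j
    by_cases h : f j < t j
    · have hb : vs j = true := by simp [hvs, h]
      rw [hb]
      exact (max_eq_right h.le).symm
    · have hb : vs j = false := by simp [hvs, h]
      rw [hb]
      exact (max_eq_left (not_lt.mp h)).symm
  have hsum_mx : (k : ℝ) + ∑ j, d j ≤ 2 * ∑ j, mx j := by
    have h1 : ∀ j : Fin k, 1 + d j ≤ 2 * mx j := by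
      intro j
      have := hs j
      have := hmxmn j
      simp only [hd]
      linarith
    calc (k : ℝ) + ∑ j, d j = ∑ j : Fin k, (1 + d j) := by
          rw [Finset.sum_add_distrib]
          simp [Finset.card_univ]
      _ ≤ ∑ j : Fin k, 2 * mx j := Finset.sum_le_sum (fun j _ => h1 j)
      _ = 2 * ∑ j, mx j := by rw [Finset.mul_sum]
  have hD0 : (0:ℝ) ≤ ∑ j, d j := Finset.sum_nonneg (fun j _ => hd0 j)
  rcases Nat.even_or_odd (cnt k vs) with hev | hod
  swap
  · -- max transversal already losing
    have hle := hlose _ (chi_T_odd vs hod)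
    rw [sum_T] at hle
    have : ∑ j, w (e k j (vs j)) = ∑ j, mx j := Finset.sum_congr rfl (fun j _ => hwvs j)
    rw [this] at hle
    linarith
  · -- flip a cheap tie-break pair
    set A := Finset.univ.filter (fun j : Fin k => j.val < m k) with hA
    have hcardA : A.card = m k := card_A hk1
    have hAne : A.Nonempty := by
      refine ⟨⟨0, hk1⟩, ?_⟩
      simp [hA, m_pos k]
    set DA := ∑ j ∈ A, d j with hDA
    have hDA0 : 0 ≤ DA := Finset.sum_nonneg (fun j _ => hd0 j)
    have hDALe : DA ≤ ∑ j, d j := by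
      apply Finset.sum_le_sum_of_subset_of_nonneg (Finset.subset_univ A)
      exact fun j _ _ => hd0 j
    obtain ⟨j₀, hj₀A, hj₀⟩ : ∃ j₀ ∈ A, d j₀ ≤ DA / m k := by
      apply Finset.exists_le_of_sum_le hAne
      rw [Finset.sum_const, hcardA, nsmul_eq_mul]
      rw [mul_div_cancel₀ _ (Nat.cast_ne_zero.mpr (m_pos k).ne')]
    set v' : Fin k → Bool := fun j => if j = j₀ then !vs j₀ else vs j with hv'
    have hj₀m : j₀.val < m k := by
      have := hj₀A; simp [hA] at this; exact this
    -- parity of v' is odd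
    have hodd' : Odd (cnt k v') := by
      unfold cnt
      cases hb : vs j₀
      · have hins : Finset.univ.filter (fun j : Fin k => j.val < m k ∧ v' j = true) =
            insert j₀ (Finset.univ.filter (fun j : Fin k => j.val < m k ∧ vs j = true)) := by
          ext j
          by_cases hj : j = j₀ <;>
            simp [hv', hj, hb, hj₀m]
        have hnm : j₀ ∉ Finset.univ.filter (fun j : Fin k => j.val < m k ∧ vs j = true) := by
          simp [hb]
        rw [hins, Finset.card_insert_of_notMem hnm]
        have : Even (cnt k vs) := hev
        unfold cnt at this
        rw [Nat.even_iff] at this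
        rw [Nat.odd_iff]
        omega
      · have hers : Finset.univ.filter (fun j : Fin k => j.val < m k ∧ v' j = true) =
            (Finset.univ.filter (fun j : Fin k => j.val < m k ∧ vs j = true)).erase j₀ := by
          ext j
          by_cases hj : j = j₀ <;>
            simp [hv', hj, hb, hj₀m]
        have hm : j₀ ∈ Finset.univ.filter (fun j : Fin k => j.val < m k ∧ vs j = true) := by
          simp [hb, hj₀m]
        rw [hers, Finset.card_erase_of_mem hm]
        have hpos : 0 < (Finset.univ.filter (fun j : Fin k => j.val < m k ∧ vs j = true)).card :=
          Finset.card_pos.mpr ⟨j₀, hm⟩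
        have : Even (cnt k vs) := hev
        unfold cnt at this
        rw [Nat.even_iff] at this
        rw [Nat.odd_iff]
        omega
    have hle := hlose _ (chi_T_odd v' hodd')
    rw [sum_T] at hle
    have hwv' : ∀ j, w (e k j (v' j)) = mx j - (if j = j₀ then d j else 0) := by
      intro j
      by_cases hj : j = j₀
      · subst hj
        simp only [hv', if_pos rfl, hd]
        have hmnj : w (e k j (!vs j)) = mn j := by
          by_cases h : f j < t j
          · have hb : vs j = true := by simp [hvs, h]
            rw [hb, Bool.not_true]
            exact (min_eq_left h.le).symm
          · have hb : vs j = false := by simp [hvs, h]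
            rw [hb, Bool.not_false]
            exact (min_eq_right (not_lt.mp h)).symm
        rw [hmnj, if_pos trivial]
        ring
      · simp only [hv', if_neg hj, hwvs j, sub_zero]
    have hsum' : ∑ j, w (e k j (v' j)) = (∑ j, mx j) - d j₀ := by
      rw [Finset.sum_congr rfl (fun j _ => hwv' j), Finset.sum_sub_distrib,
        Finset.sum_ite_eq' Finset.univ j₀ d]
      simp
    rw [hsum'] at hle
    -- DA / m ≤ DA / 2 since m ≥ 3
    have hmr : (3:ℝ) ≤ (m k : ℝ) := by exact_mod_cast m_ge3 k hk3
    have hdiv : DA / (m k : ℝ) ≤ DA / 2 := by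
      apply div_le_div_of_nonneg_left hDA0 (by norm_num) (by linarith)
    clear_value f t mx mn d vs A DA v'
    have s1 : (↑k : ℝ) + DA ≤ 2 * ∑ j, mx j := by linarith
    have s2 : (∑ j, mx j) - DA / 2 ≤ α := by linarith
    linarith

end SG

/-- for every `k ≥ 2` there is a strong simple game on `2k` voters
with critical threshold value at least `k/2`. -/
theorem exists_strong_simple_game_large_threshold (k : ℕ) (hk : 2 ≤ k) :
    ∃ χ : Finset (Fin (2 * k)) → Bool, SimpleGame χ ∧ Strong χ ∧
      (k : ℝ) / 2 ≤ mu χ ∧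
      ∀ α : ℝ, 1 ≤ α → α < (k : ℝ) / 2 → ¬ RoughlyWeighted χ α := by
  have hk1 : 0 < k := by omega
  refine ⟨SG.chi k, ⟨SG.chi_empty hk1, SG.chi_univ hk1,
      fun S T hsub h => SG.chi_mono S T hsub h⟩,
    fun S h => SG.chi_strong hk1 S h, ?_, ?_⟩
  · apply le_csInf
    · refine ⟨(2*k : ℝ), ?_, fun _ => 1, ?_, ?_⟩
      · have h : (1:ℕ) ≤ 2*k := by omega
        exact_mod_cast h
      · intro S hS
        have hne : S.Nonempty := by
          rcases S.eq_empty_or_nonempty with rfl | h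
          · rw [SG.chi_empty hk1] at hS; simp at hS
          · exact h
        have h1 : 1 ≤ S.card := Finset.card_pos.mpr hne
        rw [Finset.sum_const, nsmul_eq_mul, mul_one]
        exact_mod_cast h1
      · intro S _
        rw [Finset.sum_const, nsmul_eq_mul, mul_one]
        have h2 : S.card ≤ 2*k := by
          have := Finset.card_le_card (Finset.subset_univ S)
          simpa using this
        exact_mod_cast h2
    · rintro α ⟨hα1, w, hwin, hlose⟩
      exact SG.key hk hα1 w hwin hlose
  · rintro α hα1 hαlt ⟨w, hwin, hlose⟩
    exact absurd (SG.key hk hα1 w hwin hlose) (not_le.mpr hαlt)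
end
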